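/- The interrobang function is strictly increasing on [0,1] ∩ ℚ: for all rational numbers x, y with 0 ≤ x < y ≤ 1, we have ‽(x) < ‽(y). -/

import Mathlib

/-- The defining functional equations of the interrobang function on `[0,1] ∩ ℚ`. -/
def InterrobangEq (f : ℚ → ℝ) : Prop :=
  f 0 = 0 ∧
  (∀ x : ℚ, 0 < x → x ≤ 1/2 →
    f x = (4 : ℝ) ^ (-⌊(1/x : ℚ)⌋) * (1 - 2 * f (Int.fract (1/x)))) ∧
  (∀ x : ℚ, 1/2 < x → x ≤ 1 →
    f x = 3/8 - 3/4 * f (1/x - 1) - 1/2 * f (1 - x))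

private lemma den_sub_intCast_le (r : ℚ) (k : ℤ) : (r - (k:ℚ)).den ≤ r.den := by
  have h : (r - (k:ℚ)) = r + ((-k : ℤ) : ℚ) := by push_cast; ring
  rw [h]
  have := Rat.add_den_dvd r ((-k : ℤ) : ℚ)
  simp at this
  exact Nat.le_of_dvd r.pos this

private lemma den_inv_le (q : ℚ) (hq : 0 < q) : (q⁻¹).den ≤ q.num.natAbs := by
  have h := Rat.den_dvd (q.den) (q.num)
  rw [← Rat.inv_def] at h
  have h2 := Int.natAbs_dvd_natAbs.mpr h
  simp only [Int.natAbs_natCast] at h2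
  exact Nat.le_of_dvd (Int.natAbs_pos.mpr (ne_of_gt (Rat.num_pos.mpr hq))) h2

private lemma natAbs_lt_den (q : ℚ) (h0 : 0 < q) (h1 : q < 1) : q.num.natAbs < q.den := by
  have h3 := Rat.lt_one_iff_num_lt_denom.mpr h1
  have h2 := Rat.num_pos.mpr h0
  omega

private lemma fract_one_div_den_lt (q : ℚ) (h0 : 0 < q) (h1 : q < 1) :
    (Int.fract ((1/q : ℚ))).den < q.den :=
  calc (Int.fract ((1/q : ℚ))).den
      = ((1/q : ℚ) - ((⌊(1/q : ℚ)⌋ : ℤ) : ℚ)).den := rfl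
    _ ≤ (1/q : ℚ).den := den_sub_intCast_le _ _
    _ = (q⁻¹).den := by rw [one_div]
    _ ≤ q.num.natAbs := den_inv_le q h0
    _ < q.den := natAbs_lt_den q h0 h1

private lemma den_one_div_sub_one_lt (q : ℚ) (h0 : 0 < q) (h1 : q < 1) :
    ((1/q - 1 : ℚ)).den < q.den :=
  calc ((1/q - 1 : ℚ)).den
      = ((1/q : ℚ) - ((1 : ℤ) : ℚ)).den := by norm_num
    _ ≤ (1/q : ℚ).den := den_sub_intCast_le _ _
    _ = (q⁻¹).den := by rw [one_div]
    _ ≤ q.num.natAbs := den_inv_le q h0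
    _ < q.den := natAbs_lt_den q h0 h1

private lemma den_one_sub_le (q : ℚ) : (1 - q : ℚ).den ≤ q.den := by
  have h : (1 - q : ℚ) = -(q - ((1:ℤ):ℚ)) := by push_cast; ring
  rw [h, Rat.den_neg_eq_den]
  exact den_sub_intCast_le _ _

private lemma interrobang_key (f : ℚ → ℝ) (hf : InterrobangEq f) :
    ∀ n : ℕ, ∀ x y : ℚ, x.den ≤ n → y.den ≤ n → 0 ≤ x → x < y → y ≤ 1 → f x < f y := by
  have hf1 : f 1 = 3/8 := by
    have h := hf.2.2 1 (by norm_num) le_rfl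
    have e0 : (1/(1:ℚ) - 1) = 0 := by norm_num
    have e1 : ((1:ℚ) - 1) = 0 := by norm_num
    rw [e0, e1, hf.1] at h
    rw [h]; ring
  intro n
  induction n using Nat.strong_induction_on with
  | _ n ih =>
  -- boundedness from induction hypothesis
  have B : ∀ t : ℚ, t.den < n → 0 ≤ t → t ≤ 1 →
      0 ≤ f t ∧ f t ≤ 3/8 ∧ (t < 1 → f t < 3/8) ∧ (0 < t → 0 < f t) := by
    intro t htn ht0 ht1
    rcases ht0.eq_or_lt with h0 | h0
    · rw [← h0, hf.1]; norm_num
    rcases ht1.eq_or_lt with h1 | h1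
    · rw [h1, hf1]; norm_num
    · have hlt : f t < 3/8 := by
        have h := ih t.den htn t 1 le_rfl (by rw [Rat.den_one]; exact t.pos) h0.le h1 le_rfl
        rwa [hf1] at h
      have hgt : 0 < f t := by
        have h := ih t.den htn 0 t (by rw [Rat.den_zero]; exact t.pos) le_rfl le_rfl h0 ht1
        rwa [hf.1] at h
      exact ⟨hgt.le, hlt.le, fun _ => hlt, fun _ => hgt⟩
  -- sharp bounds on (0, 1/2]
  have HB : ∀ v : ℚ, v.den ≤ n → 0 < v → v ≤ 1/2 →
      (4:ℝ)^(-(⌊(1/v:ℚ)⌋+1)) < f v ∧ f v ≤ (4:ℝ)^(-⌊(1/v:ℚ)⌋) ∧ f v ≤ 1/16 ∧ 0 < f v := by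
    intro v hvn hv0 hv2
    have hv1 : v < 1 := lt_of_le_of_lt hv2 (by norm_num)
    have heq := hf.2.1 v hv0 hv2
    have hm2 : (2:ℤ) ≤ ⌊(1/v:ℚ)⌋ := by
      apply Int.le_floor.mpr
      push_cast
      rw [le_div_iff₀ hv0]; linarith
    have hβden : (Int.fract ((1/v:ℚ))).den < n :=
      lt_of_lt_of_le (fract_one_div_den_lt v hv0 hv1) hvn
    obtain ⟨hb0, hb38, hb38', -⟩ :=
      B _ hβden (Int.fract_nonneg _) (Int.fract_lt_one _).le
    have hfb : f (Int.fract ((1/v:ℚ))) < 3/8 := hb38' (Int.fract_lt_one _)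
    set m := ⌊(1/v:ℚ)⌋ with hm
    have hp : (0:ℝ) < (4:ℝ)^(-m) := zpow_pos (by norm_num) _
    have hsplit : (4:ℝ)^(-(m+1)) = (4:ℝ)^(-m) * (1/4) := by
      rw [show -(m+1) = -m + (-1) by ring, zpow_add₀ (by norm_num : (4:ℝ) ≠ 0)]
      norm_num
    have hlow : (4:ℝ)^(-(m+1)) < f v := by
      rw [heq, hsplit]
      exact mul_lt_mul_of_pos_left (by linarith) hp
    have hup : f v ≤ (4:ℝ)^(-m) := by
      rw [heq]
      exact mul_le_of_le_one_right hp.le (by linarith)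
    have h16 : f v ≤ 1/16 := by
      refine hup.trans ?_
      calc (4:ℝ)^(-m) ≤ (4:ℝ)^(-2:ℤ) := zpow_le_zpow_right₀ (by norm_num) (by omega)
        _ = 1/16 := by norm_num
    exact ⟨hlow, hup, h16, (zpow_pos (by norm_num) _).trans hlow⟩
  -- monotonicity on [0, 1/2]
  have Mhalf : ∀ a b : ℚ, a.den ≤ n → b.den ≤ n → 0 ≤ a → a < b → b ≤ 1/2 → f a < f b := by
    intro a b han hbn ha0 hab hb2
    have hb0 : 0 < b := lt_of_le_of_lt ha0 hab
    obtain ⟨hbl, hbu, hb16, hbP⟩ := HB b hbn hb0 hb2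
    rcases ha0.eq_or_lt with h | ha0'
    · rw [← h, hf.1]; exact hbP
    have hn1 : 1 ≤ n := le_trans a.pos han
    have ha2 : a ≤ 1/2 := (hab.trans_le hb2).le
    have ha1 : a < 1 := lt_of_le_of_lt ha2 (by norm_num)
    have hb1 : b < 1 := lt_of_le_of_lt hb2 (by norm_num)
    have heqa := hf.2.1 a ha0' ha2
    have heqb := hf.2.1 b hb0 hb2
    have hαden : (Int.fract ((1/a:ℚ))).den < n :=
      lt_of_lt_of_le (fract_one_div_den_lt a ha0' ha1) han
    obtain ⟨haf0, haf38, haf38', -⟩ :=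
      B _ hαden (Int.fract_nonneg _) (Int.fract_lt_one _).le
    have hmm : ⌊(1/b:ℚ)⌋ ≤ ⌊(1/a:ℚ)⌋ :=
      Int.floor_le_floor (one_div_le_one_div_of_le ha0' hab.le)
    rcases hmm.eq_or_lt with he | hlt
    · -- equal floors
      have hβden : (Int.fract ((1/b:ℚ))).den < n :=
        lt_of_lt_of_le (fract_one_div_den_lt b hb0 hb1) hbn
      have hba : Int.fract ((1/b:ℚ)) < Int.fract ((1/a:ℚ)) := by
        show (1/b:ℚ) - (⌊(1/b:ℚ)⌋:ℚ) < (1/a:ℚ) - (⌊(1/a:ℚ)⌋:ℚ)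
        have h1 : (1/b:ℚ) < 1/a := one_div_lt_one_div_of_lt ha0' hab
        have h2 : ((⌊(1/b:ℚ)⌋:ℚ)) = ((⌊(1/a:ℚ)⌋:ℚ)) := by exact_mod_cast he
        linarith
      have hfαβ : f (Int.fract ((1/b:ℚ))) < f (Int.fract ((1/a:ℚ))) := by
        refine ih (n-1) (by omega) _ _ (by omega) (by omega)
          (Int.fract_nonneg _) hba (Int.fract_lt_one _).le
      rw [heqa, heqb, ← he]
      have hp : (0:ℝ) < (4:ℝ)^(-⌊(1/b:ℚ)⌋) := zpow_pos (by norm_num) _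
      exact mul_lt_mul_of_pos_left (by linarith) hp
    · -- strictly smaller interval
      have hup_a : f a ≤ (4:ℝ)^(-⌊(1/a:ℚ)⌋) := by
        rw [heqa]
        exact mul_le_of_le_one_right (zpow_pos (by norm_num) _).le (by linarith)
      have hcmp : (4:ℝ)^(-⌊(1/a:ℚ)⌋) ≤ (4:ℝ)^(-(⌊(1/b:ℚ)⌋+1)) :=
        zpow_le_zpow_right₀ (by norm_num) (by omega)
      linarith
  -- main case analysis
  intro x y hxn hyn hx0 hxy hy1
  have hn1 : 1 ≤ n := le_trans x.pos hxn
  by_cases hy2 : y ≤ 1/2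
  · exact Mhalf x y hxn hyn hx0 hxy hy2
  push_neg at hy2
  have hy0 : (0:ℚ) < y := lt_trans (by norm_num) hy2
  have heqy := hf.2.2 y hy2 hy1
  by_cases hx2 : x ≤ 1/2
  · -- x ≤ 1/2 < y
    have hfx16 : f x ≤ 1/16 := by
      rcases hx0.eq_or_lt with h | h
      · rw [← h, hf.1]; norm_num
      · exact (HB x hxn h hx2).2.2.1
    rcases hy1.eq_or_lt with hy1' | hy1'
    · rw [hy1', hf1]; linarith
    · have hu0 : (0:ℚ) < 1/y - 1 := by
        have : (1:ℚ) < 1/y := by rw [lt_div_iff₀ hy0]; linarith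
        linarith
      have hu1 : (1/y - 1 : ℚ) < 1 := by
        have : (1/y:ℚ) < 2 := by rw [div_lt_iff₀ hy0]; linarith
        linarith
      have hud : (1/y - 1 : ℚ).den < n :=
        lt_of_lt_of_le (den_one_div_sub_one_lt y hy0 hy1') hyn
      obtain ⟨-, -, hu38, -⟩ := B _ hud hu0.le hu1.le
      have hfu : f (1/y - 1) < 3/8 := hu38 hu1
      have hv0 : (0:ℚ) < 1 - y := by linarith
      have hv2 : (1 - y : ℚ) ≤ 1/2 := by linarith
      have hvd : (1 - y : ℚ).den ≤ n := le_trans (den_one_sub_le y) hyn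
      have hfv : f (1 - y) ≤ 1/16 := (HB _ hvd hv0 hv2).2.2.1
      rw [heqy]; linarith
  · -- 1/2 < x < y
    push_neg at hx2
    have hx0' : (0:ℚ) < x := lt_trans (by norm_num) hx2
    have hx1 : x < 1 := lt_of_lt_of_le hxy hy1
    have heqx := hf.2.2 x hx2 (le_of_lt hx1)
    have hx_den2 : 2 ≤ x.den := by
      by_contra h
      have hd1 : x.den = 1 := by have := x.pos; omega
      have hxe : ((x.num : ℚ)) = x := (Rat.den_eq_one_iff x).mp hd1
      have h1 : (0:ℤ) < x.num := by
        have : (0:ℚ) < (x.num:ℚ) := by rw [hxe]; exact hx0'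
        exact_mod_cast this
      have h2 : x.num < 1 := by
        have : ((x.num:ℚ)) < 1 := by rw [hxe]; exact hx1
        exact_mod_cast this
      omega
    have huy0 : (0:ℚ) ≤ 1/y - 1 := by
      have : (1:ℚ) ≤ 1/y := by rw [le_div_iff₀ hy0]; linarith
      linarith
    have huylt : (1/y - 1:ℚ) < (1/x - 1:ℚ) := by
      have := one_div_lt_one_div_of_lt hx0' hxy
      linarith
    have hux1 : (1/x - 1:ℚ) ≤ 1 := by
      have : (1/x:ℚ) < 2 := by rw [div_lt_iff₀ hx0']; linarith
      linarith
    have hdx : (1/x - 1:ℚ).den ≤ n - 1 := by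
      have := den_one_div_sub_one_lt x hx0' hx1
      omega
    have hdy : (1/y - 1:ℚ).den ≤ n - 1 := by
      rcases hy1.eq_or_lt with h | h
      · have e : (1/y - 1 : ℚ) = 0 := by rw [h]; norm_num
        rw [e, Rat.den_zero]
        omega
      · have := den_one_div_sub_one_lt y hy0 h
        omega
    have hfu : f (1/y - 1) < f (1/x - 1) :=
      ih (n-1) (by omega) _ _ hdy hdx huy0 huylt hux1
    have hfv : f (1 - y) < f (1 - x) :=
      Mhalf (1-y) (1-x) (le_trans (den_one_sub_le y) hyn) (le_trans (den_one_sub_le x) hxn)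
        (by linarith) (by linarith) (by linarith)
    rw [heqx, heqy]; linarith

theorem interrobang_strictMono (f : ℚ → ℝ) (hf : InterrobangEq f) :
    ∀ x y : ℚ, 0 ≤ x → x < y → y ≤ 1 → f x < f y := by
  intro x y hx hxy hy
  exact interrobang_key f hf (max x.den y.den) x y (le_max_left _ _) (le_max_right _ _) hx hxy hy
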